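/- arXiv:1404.4104 — 3 statements merged into one kernel-verified Lean document; each statement's English description precedes it below -/
import Mathlib

section
/- Let ℓ(U,V,b) = (1/n) Σ_{i=1}^n log(1 + exp(−y_i (tr(Uᵀ X_i V) + b))). For every fixed V ∈ ℝ^{t×r}, the gradient map (U,b) ↦ (∇_U ℓ(U,V,b), ∇_b ℓ(U,V,b)) is Lipschitz continuous with Lipschitz constant L_u = (√2/n) Σ_{i=1}^n (‖X_i V‖_F + 1)², where the distance on pairs is ‖(U,b)−(Ũ,b̃)‖ = √(‖U−Ũ‖_F² + (b−b̃)²). -/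
open Matrix BigOperators

/-- Frobenius inner product of two real matrices. -/
noncomputable def frobInner {s r : ℕ} (A B : Matrix (Fin s) (Fin r) ℝ) : ℝ :=
  ∑ i, ∑ j, A i j * B i j

/-- Frobenius norm of a real matrix. -/
noncomputable def frobNorm {s r : ℕ} (A : Matrix (Fin s) (Fin r) ℝ) : ℝ :=
  Real.sqrt (∑ i, ∑ j, (A i j) ^ 2)

/-- The bilinear logistic loss
ℓ(U,V,b) = (1/n) Σᵢ log(1 + exp(−yᵢ (tr(Uᵀ Xᵢ V) + b))). -/
noncomputable def bilinLoss {n s t r : ℕ} (X : Fin n → Matrix (Fin s) (Fin t) ℝ)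
    (y : Fin n → ℝ) (U : Matrix (Fin s) (Fin r) ℝ) (V : Matrix (Fin t) (Fin r) ℝ)
    (b : ℝ) : ℝ :=
  (1 / (n : ℝ)) * ∑ i, Real.log (1 + Real.exp (-(y i) * ((Uᵀ * X i * V).trace + b)))

/-- ∇_U ℓ(U,V,b) = −(1/n) Σᵢ (1 + exp[yᵢ(tr(Uᵀ Xᵢ V) + b)])⁻¹ yᵢ Xᵢ V. -/
noncomputable def gradU {n s t r : ℕ} (X : Fin n → Matrix (Fin s) (Fin t) ℝ)
    (y : Fin n → ℝ) (U : Matrix (Fin s) (Fin r) ℝ) (V : Matrix (Fin t) (Fin r) ℝ)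
    (b : ℝ) : Matrix (Fin s) (Fin r) ℝ :=
  (-(1 / (n : ℝ))) •
    ∑ i, ((1 + Real.exp (y i * ((Uᵀ * X i * V).trace + b)))⁻¹ * y i) • (X i * V)

/-- ∇_b ℓ(U,V,b) = −(1/n) Σᵢ (1 + exp[yᵢ(tr(Uᵀ Xᵢ V) + b)])⁻¹ yᵢ. -/
noncomputable def gradB {n s t r : ℕ} (X : Fin n → Matrix (Fin s) (Fin t) ℝ)
    (y : Fin n → ℝ) (U : Matrix (Fin s) (Fin r) ℝ) (V : Matrix (Fin t) (Fin r) ℝ)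
    (b : ℝ) : ℝ :=
  (-(1 / (n : ℝ))) * ∑ i, (1 + Real.exp (y i * ((Uᵀ * X i * V).trace + b)))⁻¹ * y i

noncomputable def toE {s r : ℕ} (A : Matrix (Fin s) (Fin r) ℝ) :
    EuclideanSpace ℝ (Fin s × Fin r) := WithLp.toLp 2 (fun p : Fin s × Fin r => A p.1 p.2)

lemma norm_toE {s r : ℕ} (A : Matrix (Fin s) (Fin r) ℝ) : ‖toE A‖ = frobNorm A := by
  simp [EuclideanSpace.norm_eq, frobNorm, toE, Fintype.sum_prod_type, Real.norm_eq_abs, sq_abs]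

lemma inner_toE {s r : ℕ} (A B : Matrix (Fin s) (Fin r) ℝ) :
    (inner ℝ (toE A) (toE B) : ℝ) = frobInner A B := by
  simp [frobInner, toE, PiLp.inner_apply, RCLike.inner_apply, Fintype.sum_prod_type, mul_comm]

lemma abs_frobInner_le {s r : ℕ} (A B : Matrix (Fin s) (Fin r) ℝ) :
    |frobInner A B| ≤ frobNorm A * frobNorm B := by
  rw [← inner_toE, ← norm_toE A, ← norm_toE B]
  exact abs_real_inner_le_norm _ _

lemma frobNorm_nonneg {s r : ℕ} (A : Matrix (Fin s) (Fin r) ℝ) : 0 ≤ frobNorm A :=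
  Real.sqrt_nonneg _

lemma frobInner_sub_left {s r : ℕ} (A B C : Matrix (Fin s) (Fin r) ℝ) :
    frobInner (A - B) C = frobInner A C - frobInner B C := by
  simp [frobInner, sub_mul, Finset.sum_sub_distrib]

lemma trace_eq_frobInner {s t' : ℕ} (U M : Matrix (Fin s) (Fin t') ℝ) :
    (Uᵀ * M).trace = frobInner U M := by
  simp only [Matrix.trace, Matrix.diag, Matrix.mul_apply, Matrix.transpose_apply, frobInner]
  rw [Finset.sum_comm]

lemma toE_smul {s r : ℕ} (a : ℝ) (A : Matrix (Fin s) (Fin r) ℝ) : toE (a • A) = a • toE A := by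
  ext p; simp [toE]
lemma toE_sum {s r k : ℕ} (f : Fin k → Matrix (Fin s) (Fin r) ℝ) :
    toE (∑ i, f i) = ∑ i, toE (f i) := by
  ext p
  simp [toE, Matrix.sum_apply, WithLp.ofLp_sum]

lemma sigLip (z w : ℝ) : |(1 + Real.exp z)⁻¹ - (1 + Real.exp w)⁻¹| ≤ |z - w| := by
  wlog h : w ≤ z generalizing z w
  · rw [abs_sub_comm, abs_sub_comm z w]; exact this w z (le_of_not_ge h)
  have hz : (0:ℝ) < 1 + Real.exp z := by positivity
  have hw : (0:ℝ) < 1 + Real.exp w := by positivity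
  have key : Real.exp z - Real.exp w ≤ Real.exp z * (z - w) := by
    have h1 := Real.add_one_le_exp (w - z)
    have h2 : Real.exp w = Real.exp z * Real.exp (w - z) := by
      rw [← Real.exp_add]; ring_nf
    nlinarith [Real.exp_pos z]
  have hle : (1 + Real.exp w)⁻¹ - (1 + Real.exp z)⁻¹ ≤ z - w := by
    rw [inv_sub_inv (ne_of_gt hw) (ne_of_gt hz), div_le_iff₀ (by positivity)]
    have h3 : (1 + Real.exp z) - (1 + Real.exp w) = Real.exp z - Real.exp w := by ring
    rw [h3]
    have h4 : Real.exp z ≤ (1 + Real.exp w) * (1 + Real.exp z) := by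
      nlinarith [Real.exp_pos z, Real.exp_pos w]
    nlinarith [key, mul_le_mul_of_nonneg_right h4 (sub_nonneg.2 h)]
  have hmono : (1 + Real.exp z)⁻¹ ≤ (1 + Real.exp w)⁻¹ := by
    apply inv_anti₀ hw
    have := Real.exp_le_exp.2 h
    linarith
  rw [abs_sub_comm, abs_of_nonneg (sub_nonneg.2 hmono), abs_of_nonneg (sub_nonneg.2 h)]
  exact hle

/-- coefficient appearing in the gradients -/
noncomputable def coeff {n s t r : ℕ} (X : Fin n → Matrix (Fin s) (Fin t) ℝ)
    (y : Fin n → ℝ) (V : Matrix (Fin t) (Fin r) ℝ) (U : Matrix (Fin s) (Fin r) ℝ)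
    (b : ℝ) (i : Fin n) : ℝ :=
  (1 + Real.exp (y i * ((Uᵀ * X i * V).trace + b)))⁻¹ * y i


set_option maxHeartbeats 1000000 in
/-- Lemma 1, part (a): for every fixed `V`, the map `(U, b) ↦ (∇_U ℓ, ∇_b ℓ)`
is Lipschitz continuous with constant `L_u = (√2/n) Σᵢ (‖Xᵢ V‖_F + 1)²`,
with respect to the joint Euclidean distance `√(‖U − U'‖_F² + (b − b')²)`. -/
theorem gradUb_lipschitz
    (n s t r : ℕ) (hn : 0 < n) (hr : 1 ≤ r)
    (X : Fin n → Matrix (Fin s) (Fin t) ℝ) (y : Fin n → ℝ)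
    (hy : ∀ i, y i = 1 ∨ y i = -1)
    (V : Matrix (Fin t) (Fin r) ℝ)
    (U U' : Matrix (Fin s) (Fin r) ℝ) (b b' : ℝ) :
    Real.sqrt ((frobNorm (gradU X y U V b - gradU X y U' V b')) ^ 2
        + (gradB X y U V b - gradB X y U' V b') ^ 2)
      ≤ (Real.sqrt 2 / (n : ℝ)) * (∑ i, (frobNorm (X i * V) + 1) ^ 2)
          * Real.sqrt ((frobNorm (U - U')) ^ 2 + (b - b') ^ 2) := by
  have hn' : (0:ℝ) < n := Nat.cast_pos.2 hn
  have hinv : (0:ℝ) < 1 / (n:ℝ) := by positivity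
  set c := coeff X y V U b with hc_def
  set c' := coeff X y V U' b' with hc'_def
  set D := Real.sqrt ((frobNorm (U - U')) ^ 2 + (b - b') ^ 2) with hD_def
  have hD0 : 0 ≤ D := Real.sqrt_nonneg _
  have hw0 : ∀ i : Fin n, (0:ℝ) ≤ frobNorm (X i * V) := fun i => frobNorm_nonneg _
  have hDU : frobNorm (U - U') ≤ D :=
    calc frobNorm (U - U') = Real.sqrt ((frobNorm (U - U')) ^ 2) :=
          (Real.sqrt_sq (frobNorm_nonneg _)).symm
      _ ≤ D := Real.sqrt_le_sqrt (le_add_of_nonneg_right (sq_nonneg _))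
  have hDb : |b - b'| ≤ D :=
    calc |b - b'| = Real.sqrt ((b - b') ^ 2) := (Real.sqrt_sq_eq_abs _).symm
      _ ≤ D := Real.sqrt_le_sqrt (le_add_of_nonneg_left (sq_nonneg _))
  -- pointwise coefficient bound
  have hΔc : ∀ i, |c i - c' i| ≤ (frobNorm (X i * V) + 1) * D := by
    intro i
    have hy1 : |y i| = 1 := by rcases hy i with h | h <;> simp [h]
    have e1 : c i - c' i = ((1 + Real.exp (y i * ((Uᵀ * X i * V).trace + b)))⁻¹
        - (1 + Real.exp (y i * ((U'ᵀ * X i * V).trace + b')))⁻¹) * y i := by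
      simp only [hc_def, hc'_def, coeff]; ring
    have e2 : |c i - c' i| ≤ |y i * ((Uᵀ * X i * V).trace + b)
        - y i * ((U'ᵀ * X i * V).trace + b')| := by
      rw [e1, abs_mul, hy1, mul_one]
      exact sigLip _ _
    have ht : (Uᵀ * X i * V).trace - (U'ᵀ * X i * V).trace
        = frobInner (U - U') (X i * V) := by
      rw [Matrix.mul_assoc, Matrix.mul_assoc, trace_eq_frobInner, trace_eq_frobInner,
        frobInner_sub_left]
    have e3 : y i * ((Uᵀ * X i * V).trace + b) - y i * ((U'ᵀ * X i * V).trace + b')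
        = y i * (frobInner (U - U') (X i * V) + (b - b')) := by
      linear_combination y i * ht
    rw [e3, abs_mul, hy1, one_mul] at e2
    have h1 := abs_frobInner_le (U - U') (X i * V)
    have h2 := abs_add_le (frobInner (U - U') (X i * V)) (b - b')
    have h3 := mul_le_mul_of_nonneg_right hDU (hw0 i)
    nlinarith [e2, h1, h2, h3, hDb]
  -- gradU difference
  have hdiffU : gradU X y U V b - gradU X y U' V b'
      = (-(1 / (n:ℝ))) • ∑ i, (c i - c' i) • (X i * V) := by
    show ((-(1 / (n:ℝ))) • ∑ i, c i • (X i * V))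
        - ((-(1 / (n:ℝ))) • ∑ i, c' i • (X i * V)) = _
    rw [← smul_sub, ← Finset.sum_sub_distrib]
    congr 1
    exact Finset.sum_congr rfl fun i _ => (sub_smul _ _ _).symm
  have hA : frobNorm (gradU X y U V b - gradU X y U' V b')
      ≤ (1 / (n:ℝ)) * ∑ i, |c i - c' i| * frobNorm (X i * V) := by
    rw [hdiffU, ← norm_toE, toE_smul, norm_smul]
    have hcoef : ‖(-(1 / (n:ℝ)))‖ = 1 / (n:ℝ) := by
      rw [Real.norm_eq_abs, abs_neg, abs_of_pos hinv]
    rw [hcoef]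
    apply mul_le_mul_of_nonneg_left _ hinv.le
    rw [toE_sum]
    simp only [toE_smul]
    calc ‖∑ i, (c i - c' i) • toE (X i * V)‖
        ≤ ∑ i, ‖(c i - c' i) • toE (X i * V)‖ := norm_sum_le _ _
      _ = ∑ i, |c i - c' i| * frobNorm (X i * V) := by
          exact Finset.sum_congr rfl fun i _ => by
            rw [norm_smul, Real.norm_eq_abs, norm_toE]
  -- gradB difference
  have hB : |gradB X y U V b - gradB X y U' V b'|
      ≤ (1 / (n:ℝ)) * ∑ i, |c i - c' i| := by
    have e : gradB X y U V b - gradB X y U' V b'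
        = (-(1 / (n:ℝ))) * ∑ i, (c i - c' i) := by
      show ((-(1 / (n:ℝ))) * ∑ i, c i) - ((-(1 / (n:ℝ))) * ∑ i, c' i) = _
      rw [← mul_sub, ← Finset.sum_sub_distrib]
    rw [e, abs_mul, abs_neg, abs_of_pos hinv]
    exact mul_le_mul_of_nonneg_left (Finset.abs_sum_le_sum_abs _ _) hinv.le
  -- combine
  set A := frobNorm (gradU X y U V b - gradU X y U' V b') with hA_def
  set B := gradB X y U V b - gradB X y U' V b' with hB_def
  have hA0 : 0 ≤ A := frobNorm_nonneg _
  have hfront : Real.sqrt (A ^ 2 + B ^ 2) ≤ A + |B| := by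
    rw [← Real.sqrt_sq (by positivity : (0:ℝ) ≤ A + |B|)]
    apply Real.sqrt_le_sqrt
    nlinarith [abs_nonneg B, sq_abs B]
  have hsum : (∑ i, |c i - c' i| * frobNorm (X i * V)) + ∑ i, |c i - c' i|
      ≤ D * ∑ i, (frobNorm (X i * V) + 1) ^ 2 := by
    rw [← Finset.sum_add_distrib, Finset.mul_sum]
    apply Finset.sum_le_sum
    intro i _
    have h1 := hΔc i
    have h2 := hw0 i
    have h3 := mul_le_mul_of_nonneg_right h1 (by linarith : (0:ℝ) ≤ frobNorm (X i * V) + 1)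
    nlinarith [abs_nonneg (c i - c' i)]
  have hS0 : (0:ℝ) ≤ ∑ i, (frobNorm (X i * V) + 1) ^ 2 :=
    Finset.sum_nonneg fun i _ => sq_nonneg _
  have h12 : (1:ℝ) ≤ Real.sqrt 2 := by
    have := Real.sqrt_le_sqrt (by norm_num : (1:ℝ) ≤ 2)
    simpa using this
  have hmid : A + |B| ≤ (1 / (n:ℝ)) * (D * ∑ i, (frobNorm (X i * V) + 1) ^ 2) := by
    have := mul_le_mul_of_nonneg_left hsum hinv.le
    calc A + |B| ≤ (1 / (n:ℝ)) * (∑ i, |c i - c' i| * frobNorm (X i * V))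
          + (1 / (n:ℝ)) * ∑ i, |c i - c' i| := add_le_add hA hB
      _ = (1 / (n:ℝ)) * ((∑ i, |c i - c' i| * frobNorm (X i * V)) + ∑ i, |c i - c' i|) := by ring
      _ ≤ _ := this
  have hlast : (1 / (n:ℝ)) * (D * ∑ i, (frobNorm (X i * V) + 1) ^ 2)
      ≤ (Real.sqrt 2 / (n:ℝ)) * (∑ i, (frobNorm (X i * V) + 1) ^ 2) * D := by
    have hdiv : (1:ℝ) / (n:ℝ) ≤ Real.sqrt 2 / (n:ℝ) := by gcongr
    calc (1 / (n:ℝ)) * (D * ∑ i, (frobNorm (X i * V) + 1) ^ 2)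
        = (1 / (n:ℝ)) * (∑ i, (frobNorm (X i * V) + 1) ^ 2) * D := by ring
      _ ≤ (Real.sqrt 2 / (n:ℝ)) * (∑ i, (frobNorm (X i * V) + 1) ^ 2) * D :=
          mul_le_mul_of_nonneg_right (mul_le_mul_of_nonneg_right hdiv hS0) hD0
  calc Real.sqrt (A ^ 2 + B ^ 2) ≤ A + |B| := hfront
    _ ≤ (1 / (n:ℝ)) * (D * ∑ i, (frobNorm (X i * V) + 1) ^ 2) := hmid
    _ ≤ _ := hlast
end

section
/- Let {S_N}_{N≥0} be a nonnegative, nonincreasing real sequence, let C > 0, and let α ∈ (0,1). If S_N ≤ C·(S_{N−1} − S_N)^α for all N ≥ 1, then there exists a constant c > 0 such that S_N ≤ c·N^{−α/(1−α)} for all N ≥ 1. -/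
open Real

/-- Bernoulli-type inequality for negative exponents: `1 + q(1-t) ≤ t^(-q)` for `t ∈ (0,1]`. -/
lemma bern_neg_aux {t q : ℝ} (ht : 0 < t) (ht1 : t ≤ 1) (hq : 0 < q) :
    1 + q * (1 - t) ≤ t ^ (-q) := by
  rw [Real.rpow_neg ht.le]
  have htq : 0 < t ^ q := Real.rpow_pos_of_pos ht q
  rcases le_or_gt 1 q with h1 | h1
  · have hs : (-1 : ℝ) ≤ 1 / t - 1 := by
      have : 0 < 1 / t := by positivity
      linarith
    have hb := one_add_mul_self_le_rpow_one_add hs h1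
    have he : ((1 : ℝ) + (1 / t - 1)) ^ q = (t ^ q)⁻¹ := by
      rw [show (1 : ℝ) + (1 / t - 1) = t⁻¹ by ring, Real.inv_rpow ht.le]
    rw [he] at hb
    have h2 : (2 - t) * t ≤ 1 := by nlinarith [sq_nonneg (1 - t)]
    have h3 : 2 - t ≤ 1 / t := (le_div_iff₀ ht).mpr h2
    have h4 : q * (1 - t) ≤ q * (1 / t - 1) :=
      mul_le_mul_of_nonneg_left (by linarith) hq.le
    linarith
  · have hb := rpow_one_add_le_one_add_mul_self (s := t - 1) (by linarith) hq.le h1.le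
    rw [show (1 : ℝ) + (t - 1) = t by ring] at hb
    rw [← one_div, le_div_iff₀ htq]
    have hx : 0 ≤ q * (1 - t) := mul_nonneg hq.le (by linarith)
    nlinarith [sq_nonneg (q * (1 - t))]

/-- One-step increment of the energy `s ↦ s^(-q)`. -/
lemma key_step_aux {a b q p D S1 : ℝ} (hb : 0 < b) (hba : b ≤ a) (hbS1 : b ≤ S1)
    (hD : 0 < D) (hq : 0 < q) (hpq : p = q + 1)
    (hΔ : b ^ p / D ≤ a - b) :
    a ^ (-q) + min (q * (2:ℝ) ^ (-p) / D) ((1 - (2:ℝ) ^ (-q)) * S1 ^ (-q)) ≤ b ^ (-q) := by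
  have ha : 0 < a := hb.trans_le hba
  have haq : 0 < a ^ (-q) := Real.rpow_pos_of_pos ha _
  have hp0 : 0 ≤ p := by nlinarith
  rcases le_or_gt a (2 * b) with hcase | hcase
  · -- b ≥ a/2 : use Bernoulli
    have key := bern_neg_aux (t := b / a) (div_pos hb ha) ((div_le_one ha).mpr hba) hq
    rw [Real.div_rpow hb.le ha.le] at key
    have key2 : a ^ (-q) + q * (1 - b / a) * a ^ (-q) ≤ b ^ (-q) := by
      have h := mul_le_mul_of_nonneg_right key haq.le
      rw [div_mul_cancel₀ _ haq.ne'] at h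
      nlinarith
    have h2b : a / 2 ≤ b := by linarith
    have hbp : (a / 2) ^ p ≤ b ^ p := Real.rpow_le_rpow (by positivity) h2b hp0
    have he2 : (a / 2) ^ p = a ^ p * (2:ℝ) ^ (-p) := by
      rw [Real.div_rpow ha.le (by norm_num), Real.rpow_neg (by norm_num), div_eq_mul_inv]
    have hΔ2 : a ^ p * (2:ℝ) ^ (-p) / D ≤ a - b := by
      refine le_trans ?_ hΔ
      rw [← he2]
      gcongr
    have hap : a ^ p * a ^ (-q) = a := by
      rw [← Real.rpow_add ha, show p + -q = 1 by rw [hpq]; ring, Real.rpow_one]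
    have e1 : q * (1 - b / a) * a ^ (-q) = q * (a - b) * a ^ (-q) / a := by
      rw [one_sub_div ha.ne']
      ring
    have h5 : q * (a ^ p * (2:ℝ) ^ (-p) / D) * a ^ (-q) / a ≤ q * (a - b) * a ^ (-q) / a := by
      gcongr
    have e2 : q * (a ^ p * (2:ℝ) ^ (-p) / D) * a ^ (-q) / a = q * (2:ℝ) ^ (-p) / D := by
      calc q * (a ^ p * (2:ℝ) ^ (-p) / D) * a ^ (-q) / a
          = (q * (2:ℝ) ^ (-p) / D) * (a ^ p * a ^ (-q) / a) := by ring
        _ = q * (2:ℝ) ^ (-p) / D := by rw [hap, div_self ha.ne', mul_one]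
    have := min_le_left (q * (2:ℝ) ^ (-p) / D) ((1 - (2:ℝ) ^ (-q)) * S1 ^ (-q))
    rw [e1] at key2
    linarith
  · -- b < a/2 : big drop
    have hmono : a ^ (-q) ≤ (2 * b) ^ (-q) :=
      Real.rpow_le_rpow_of_nonpos (by positivity) hcase.le (neg_nonpos.mpr hq.le)
    rw [Real.mul_rpow (by norm_num) hb.le] at hmono
    have hbS : S1 ^ (-q) ≤ b ^ (-q) :=
      Real.rpow_le_rpow_of_nonpos hb hbS1 (neg_nonpos.mpr hq.le)
    have h2q : (2:ℝ) ^ (-q) ≤ 1 :=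
      Real.rpow_le_one_of_one_le_of_nonpos (by norm_num) (neg_nonpos.mpr hq.le)
    have hbq : 0 < b ^ (-q) := Real.rpow_pos_of_pos hb _
    have h6 : (1 - (2:ℝ) ^ (-q)) * S1 ^ (-q) ≤ (1 - (2:ℝ) ^ (-q)) * b ^ (-q) :=
      mul_le_mul_of_nonneg_left hbS (by linarith)
    have := min_le_right (q * (2:ℝ) ^ (-p) / D) ((1 - (2:ℝ) ^ (-q)) * S1 ^ (-q))
    nlinarith

/-- Key recursion lemma for the sublinear convergence rate (Theorem 3, case θ ∈ (1/2,1)):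
if `{S_N}` is nonnegative, nonincreasing, `C > 0`, `α ∈ (0,1)` and
`S_N ≤ C (S_{N−1} − S_N)^α` for all `N ≥ 1`, then there is `c > 0` with
`S_N ≤ c N^{−α/(1−α)}` for all `N ≥ 1`. -/
theorem sublinear_rate_recursion (S : ℕ → ℝ) (C α : ℝ) (hC : 0 < C)
    (hα : α ∈ Set.Ioo (0 : ℝ) 1)
    (hnonneg : ∀ N, 0 ≤ S N)
    (hmono : ∀ N, S (N + 1) ≤ S N)
    (hrec : ∀ N, S (N + 1) ≤ C * (S N - S (N + 1)) ^ α) :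
    ∃ c : ℝ, 0 < c ∧ ∀ N : ℕ, 1 ≤ N → S N ≤ c * (N : ℝ) ^ (-(α / (1 - α))) := by
  obtain ⟨hα0, hα1⟩ := hα
  have hanti : Antitone S := antitone_nat_of_succ_le hmono
  by_cases h1 : S 1 ≤ 0
  · refine ⟨1, one_pos, fun N hN => ?_⟩
    have hSN : S N ≤ 0 := le_trans (hanti hN) h1
    have h0 : (0:ℝ) ≤ (N:ℝ) ^ (-(α / (1 - α))) := Real.rpow_nonneg (Nat.cast_nonneg N) _
    linarith
  push_neg at h1
  set q : ℝ := (1 - α) / α with hqdef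
  have hq : 0 < q := div_pos (by linarith) hα0
  set p : ℝ := 1 / α with hpdef
  have hpq : p = q + 1 := by rw [hpdef, hqdef]; field_simp; ring
  set D : ℝ := C ^ p with hDdef
  have hD : 0 < D := Real.rpow_pos_of_pos hC p
  -- Step A: the drop estimate
  have stepA : ∀ n : ℕ, 0 < S (n + 1) → S (n + 1) ^ p / D ≤ S n - S (n + 1) := by
    intro n hpos
    have hΔ0 : 0 ≤ S n - S (n + 1) := by linarith [hmono n]
    have hrecn := hrec n
    have hΔpos : 0 < S n - S (n + 1) := by
      rcases hΔ0.lt_or_eq with h | h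
      · exact h
      · exfalso
        rw [← h, Real.zero_rpow hα0.ne', mul_zero] at hrecn
        linarith
    have hpow : S (n + 1) ^ p ≤ (C * (S n - S (n + 1)) ^ α) ^ p :=
      Real.rpow_le_rpow (hnonneg _) hrecn (by positivity)
    rw [Real.mul_rpow hC.le (Real.rpow_nonneg hΔ0 _), ← Real.rpow_mul hΔ0,
      show α * p = 1 by rw [hpdef]; field_simp, Real.rpow_one] at hpow
    rw [div_le_iff₀ hD, mul_comm]
    exact hpow
  -- Step B: the increment constant
  set μ : ℝ := min (q * (2:ℝ) ^ (-p) / D) ((1 - (2:ℝ) ^ (-q)) * (S 1) ^ (-q)) with hμdef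
  have h2q : (2:ℝ) ^ (-q) < 1 :=
    Real.rpow_lt_one_of_one_lt_of_neg (by norm_num) (by linarith)
  have hμ : 0 < μ :=
    lt_min (by positivity) (mul_pos (by linarith) (Real.rpow_pos_of_pos h1 _))
  -- Step C: induction
  have stepC : ∀ n : ℕ, 0 < S (n + 1) → (S 1) ^ (-q) + n * μ ≤ (S (n + 1)) ^ (-q) := by
    intro n
    induction n with
    | zero => intro _; simp
    | succ m ih =>
      intro hpos
      have hpos' : 0 < S (m + 1) := lt_of_lt_of_le hpos (hmono (m + 1))
      have hih := ih hpos'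
      have hstep := key_step_aux (a := S (m + 1)) (b := S (m + 2)) hpos (hmono (m + 1))
        (hanti (show 1 ≤ m + 2 by omega)) hD hq hpq (stepA (m + 1) hpos)
      rw [← hμdef] at hstep
      push_cast
      linarith
  -- conclusion
  set ν : ℝ := min ((S 1) ^ (-q)) μ with hνdef
  have hν : 0 < ν := lt_min (Real.rpow_pos_of_pos h1 _) hμ
  refine ⟨ν ^ (-(1 / q)), Real.rpow_pos_of_pos hν _, ?_⟩
  intro N hN
  have hexp : -(α / (1 - α)) = -(1 / q) := by rw [hqdef, one_div_div]
  rw [hexp]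
  by_cases hSN : 0 < S N
  · obtain ⟨n, rfl⟩ : ∃ n, N = n + 1 := ⟨N - 1, by omega⟩
    have hC0 := stepC n hSN
    have hν1 : ν ≤ (S 1) ^ (-q) := min_le_left _ _
    have hν2 : ν ≤ μ := min_le_right _ _
    have hn0 : (0:ℝ) ≤ (n:ℝ) := Nat.cast_nonneg n
    have hνn : ν * (n:ℝ) ≤ μ * (n:ℝ) := mul_le_mul_of_nonneg_right hν2 hn0
    have hlow : ν * ((n:ℝ) + 1) ≤ (S (n + 1)) ^ (-q) := by nlinarith
    have hfin : ((S (n + 1)) ^ (-q)) ^ (-(1 / q)) ≤ (ν * ((n:ℝ) + 1)) ^ (-(1 / q)) :=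
      Real.rpow_le_rpow_of_nonpos (by positivity) hlow
        (neg_nonpos.mpr (by positivity))
    have e : (-q) * (-(1 / q)) = 1 := by field_simp
    rw [← Real.rpow_mul (hnonneg _), e, Real.rpow_one,
      Real.mul_rpow hν.le (by positivity)] at hfin
    push_cast
    exact hfin
  · push_neg at hSN
    have hrhs : (0:ℝ) ≤ ν ^ (-(1 / q)) * (N:ℝ) ^ (-(1 / q)) := by positivity
    linarith
end

section
/- Let ℓ(U,V,b) = (1/n) Σ_{i=1}^n log(1 + exp(−y_i (tr(Uᵀ X_i V) + b))). Fix V ∈ ℝ^{t×r} and let L ≥ (√2/n) Σ_{i=1}^n (‖X_i V‖_F + 1)². Then for all (U,b), (Ũ,b̃) ∈ ℝ^{s×r} × ℝ: ℓ(Ũ,V,b̃) ≤ ℓ(U,V,b) + ⟨∇_U ℓ(U,V,b), Ũ − U⟩ + ∇_b ℓ(U,V,b)·(b̃ − b) + (L/2)‖Ũ − U‖_F² + (L/2)(b̃ − b)². -/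
open Matrix BigOperators

noncomputable def sig (x : ℝ) : ℝ := (1 + Real.exp (-x))⁻¹

lemma onePlusExp_pos (x : ℝ) : 0 < 1 + Real.exp x := by positivity

lemma sig_pos (x : ℝ) : 0 < sig x := by
  unfold sig; positivity

lemma sig_lt_one (x : ℝ) : sig x < 1 := by
  unfold sig
  rw [inv_lt_one_iff₀]
  right
  nlinarith [Real.exp_pos (-x)]

lemma hasDerivAt_softplus (x : ℝ) :
    HasDerivAt (fun x => Real.log (1 + Real.exp x)) (sig x) x := by
  have h1 : HasDerivAt (fun x : ℝ => 1 + Real.exp x) (Real.exp x) x :=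
    (Real.hasDerivAt_exp x).const_add 1
  have h2 := (Real.hasDerivAt_log (ne_of_gt (onePlusExp_pos x))).comp x h1
  refine h2.congr_deriv ?_
  unfold sig
  rw [Real.exp_neg]
  field_simp
  ring

lemma hasDerivAt_sig (x : ℝ) :
    HasDerivAt sig (sig x * (1 - sig x)) x := by
  have h1 : HasDerivAt (fun x : ℝ => 1 + Real.exp (-x)) (-Real.exp (-x)) x := by
    have := ((Real.hasDerivAt_exp (-x)).comp x ((hasDerivAt_id x).neg)).const_add 1
    simpa using this
  have hne : (1 + Real.exp (-x)) ≠ 0 := ne_of_gt (by positivity)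
  have h2 := h1.inv hne
  refine h2.congr_deriv ?_
  unfold sig
  have he := Real.exp_pos (-x)
  field_simp
  ring

lemma sig_deriv_le (x : ℝ) : sig x * (1 - sig x) ≤ 1/4 := by
  nlinarith [sq_nonneg (sig x - 1/2)]

/-- φ(x) = x/4 - sig x is monotone. -/
lemma phi_mono : Monotone (fun x : ℝ => x/4 - sig x) := by
  apply monotone_of_deriv_nonneg
  · intro x
    exact ((hasDerivAt_id x).div_const 4).sub (hasDerivAt_sig x) |>.differentiableAt
  · intro x
    have hd : HasDerivAt (fun x : ℝ => x/4 - sig x) (1/4 - sig x * (1 - sig x)) x := by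
      exact ((hasDerivAt_id x).div_const 4).sub (hasDerivAt_sig x)
    rw [hd.deriv]
    have := sig_deriv_le x
    have := sig_pos x
    linarith

lemma softplus_quad (w c : ℝ) :
    Real.log (1 + Real.exp (w + c)) ≤ Real.log (1 + Real.exp w) + sig w * c + c^2/8 := by
  set g : ℝ → ℝ := fun c => Real.log (1 + Real.exp w) + sig w * c + c^2/8
      - Real.log (1 + Real.exp (w + c)) with hg
  have hderiv : ∀ x : ℝ, HasDerivAt g ((w+x)/4 - sig (w+x) - (w/4 - sig w)) x := by
    intro x
    have h1 : HasDerivAt (fun c : ℝ => Real.log (1 + Real.exp w) + sig w * c + c^2/8)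
        (sig w + x/4) x := by
      have ha : HasDerivAt (fun c : ℝ => sig w * c) (sig w) x := by
        simpa using (hasDerivAt_id x).const_mul (sig w)
      have hb : HasDerivAt (fun c : ℝ => c^2/8) (x/4) x := by
        have := ((hasDerivAt_pow 2 x)).div_const 8
        refine this.congr_deriv ?_
        ring
      exact (ha.const_add _).add hb
    have h2 : HasDerivAt (fun c : ℝ => Real.log (1 + Real.exp (w + c))) (sig (w+x)) x := by
      have := (hasDerivAt_softplus (w+x)).comp x ((hasDerivAt_id x).const_add w)
      exact this.congr_deriv (mul_one _)
    have := h1.sub h2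
    refine this.congr_deriv ?_
    ring
  have hdiff : Differentiable ℝ g := fun x => (hderiv x).differentiableAt
  have hg0 : g 0 = 0 := by simp [hg]
  have key : 0 ≤ g c := by
    rcases le_total 0 c with hc | hc
    · have hmono : MonotoneOn g (Set.Ici 0) := by
        apply monotoneOn_of_deriv_nonneg (convex_Ici 0) hdiff.continuous.continuousOn
          hdiff.differentiableOn
        intro x hx
        rw [interior_Ici] at hx
        rw [(hderiv x).deriv]
        have := phi_mono (show w ≤ w + x by linarith [Set.mem_Ioi.mp hx])
        simpa using this
      have := hmono (Set.mem_Ici.mpr le_rfl) (Set.mem_Ici.mpr hc) hc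
      linarith [hg0 ▸ this]
    · have hanti : AntitoneOn g (Set.Iic 0) := by
        apply antitoneOn_of_deriv_nonpos (convex_Iic 0) hdiff.continuous.continuousOn
          hdiff.differentiableOn
        intro x hx
        rw [interior_Iic] at hx
        rw [(hderiv x).deriv]
        have := phi_mono (show w + x ≤ w by linarith [Set.mem_Iio.mp hx])
        simpa using this
      have := hanti (Set.mem_Iic.mpr hc) (Set.mem_Iic.mpr le_rfl) hc
      linarith [hg0 ▸ this]
  simp only [hg] at key
  linarith

lemma frobNorm_sq {s r : ℕ} (A : Matrix (Fin s) (Fin r) ℝ) :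
    (frobNorm A)^2 = ∑ i, ∑ j, (A i j)^2 := by
  apply Real.sq_sqrt
  positivity

lemma frob_cauchy {s r : ℕ} (A D : Matrix (Fin s) (Fin r) ℝ) :
    (frobInner A D)^2 ≤ (frobNorm A)^2 * (frobNorm D)^2 := by
  rw [frobNorm_sq, frobNorm_sq]
  unfold frobInner
  rw [← Finset.sum_product', ← Finset.sum_product', ← Finset.sum_product']
  exact Finset.sum_mul_sq_le_sq_mul_sq _ _ _

lemma frob_quad {s r : ℕ} (A D : Matrix (Fin s) (Fin r) ℝ) (e : ℝ) :
    (frobInner A D + e)^2 ≤ (frobNorm A + 1)^2 * ((frobNorm D)^2 + e^2) := by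
  set a := frobNorm A
  set d := frobNorm D
  set c := frobInner A D
  have ha : 0 ≤ a := frobNorm_nonneg A
  have hd : 0 ≤ d := frobNorm_nonneg D
  have hcs : c^2 ≤ a^2 * d^2 := frob_cauchy A D
  have habs : |c| ≤ a * d := by
    rw [← Real.sqrt_sq_eq_abs]
    calc Real.sqrt (c^2) ≤ Real.sqrt (a^2 * d^2) := Real.sqrt_le_sqrt hcs
      _ = a * d := by rw [← mul_pow, Real.sqrt_sq (by positivity)]
  have hce : c * e ≤ (a*d) * |e| := by
    calc c * e ≤ |c * e| := le_abs_self _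
      _ = |c| * |e| := abs_mul _ _
      _ ≤ (a*d) * |e| := by exact mul_le_mul_of_nonneg_right habs (abs_nonneg e)
  nlinarith [sq_nonneg (a*|e| - d), sq_abs e, abs_nonneg e, sq_nonneg (a*d), sq_nonneg e,
    mul_nonneg ha hd, mul_nonneg (mul_nonneg ha ha) (sq_nonneg e),
    mul_nonneg (mul_nonneg ha hd) (mul_nonneg hd hd)]

lemma trace_frob {s r : ℕ} (A D : Matrix (Fin s) (Fin r) ℝ) :
    (Dᵀ * A).trace = frobInner A D := by
  unfold frobInner
  simp only [Matrix.trace, Matrix.diag, Matrix.mul_apply, Matrix.transpose_apply]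
  rw [Finset.sum_comm]
  exact Finset.sum_congr rfl fun i _ => Finset.sum_congr rfl fun j _ => mul_comm _ _

lemma frobInner_smul_left {s r : ℕ} (c : ℝ) (A B : Matrix (Fin s) (Fin r) ℝ) :
    frobInner (c • A) B = c * frobInner A B := by
  unfold frobInner
  simp [Finset.mul_sum, mul_assoc]

lemma frobInner_sum_left {ι : Type*} [Fintype ι] {s r : ℕ}
    (f : ι → Matrix (Fin s) (Fin r) ℝ) (B : Matrix (Fin s) (Fin r) ℝ) :
    frobInner (∑ i, f i) B = ∑ i, frobInner (f i) B := by
  unfold frobInner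
  simp only [Matrix.sum_apply, Finset.sum_mul]
  calc (∑ k, ∑ j, ∑ i, f i k j * B k j)
      = ∑ k, ∑ i, ∑ j, f i k j * B k j :=
        Finset.sum_congr rfl (fun _ _ => Finset.sum_comm)
    _ = ∑ i, ∑ k, ∑ j, f i k j * B k j := Finset.sum_comm

/-- Descent inequality: if `L ≥ (√2/n) Σᵢ (‖Xᵢ V‖_F + 1)²` (the Lipschitz constant of
Lemma 1), then for all `(U, b)` and `(U', b')`,
`ℓ(U',V,b') ≤ ℓ(U,V,b) + ⟨∇_U ℓ(U,V,b), U'−U⟩ + ∇_b ℓ(U,V,b)(b'−b)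
 + (L/2)‖U'−U‖_F² + (L/2)(b'−b)²`. -/
theorem descent_inequality
    (n s t r : ℕ) (hn : 0 < n) (hr : 1 ≤ r)
    (X : Fin n → Matrix (Fin s) (Fin t) ℝ) (y : Fin n → ℝ)
    (hy : ∀ i, y i = 1 ∨ y i = -1)
    (V : Matrix (Fin t) (Fin r) ℝ) (L : ℝ)
    (hL : (Real.sqrt 2 / (n : ℝ)) * ∑ i, (frobNorm (X i * V) + 1) ^ 2 ≤ L)
    (U U' : Matrix (Fin s) (Fin r) ℝ) (b b' : ℝ) :
    bilinLoss X y U' V b'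
      ≤ bilinLoss X y U V b + frobInner (gradU X y U V b) (U' - U)
        + gradB X y U V b * (b' - b)
        + L / 2 * (frobNorm (U' - U)) ^ 2 + L / 2 * (b' - b) ^ 2 := by
  have hn' : (0:ℝ) < n := by exact_mod_cast hn
  set D := U' - U with hD
  set e := b' - b with he
  set A : Fin n → Matrix (Fin s) (Fin r) ℝ := fun i => X i * V with hA
  set z : Fin n → ℝ := fun i => (Uᵀ * X i * V).trace + b with hz
  set c : Fin n → ℝ := fun i => -(y i) * (frobInner (A i) D + e) with hc
  set w : Fin n → ℝ := fun i => -(y i) * z i with hw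
  -- trace identity
  have htr : ∀ i, (U'ᵀ * X i * V).trace + b' = z i + (frobInner (A i) D + e) := by
    intro i
    have hU' : U' = U + D := by rw [hD]; abel
    have hmat : U'ᵀ * X i * V = Uᵀ * X i * V + Dᵀ * (X i * V) := by
      rw [hU', Matrix.transpose_add, Matrix.add_mul, Matrix.add_mul]
      simp only [Matrix.mul_assoc]
    rw [hmat, Matrix.trace_add, trace_frob]
    simp only [hz, hA]
    ring
  -- per-sample argument rewriting
  have harg : ∀ i, -(y i) * ((U'ᵀ * X i * V).trace + b') = w i + c i := by
    intro i; rw [htr i]; simp only [hw, hc]; ring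
  -- per-sample softplus bound
  have hsample : ∀ i, Real.log (1 + Real.exp (-(y i) * ((U'ᵀ * X i * V).trace + b')))
      ≤ Real.log (1 + Real.exp (w i)) + sig (w i) * c i + (c i)^2 / 8 := by
    intro i; rw [harg i]; exact softplus_quad (w i) (c i)
  -- sig (w i) in terms of original exponent
  have hsig : ∀ i, sig (w i) = (1 + Real.exp (y i * z i))⁻¹ := by
    intro i
    simp only [hw, sig, neg_mul, neg_neg]
  -- gradient identity
  have hgrad : frobInner (gradU X y U V b) D + gradB X y U V b * e
      = (1 / (n:ℝ)) * ∑ i, sig (w i) * c i := by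
    unfold gradU gradB
    rw [frobInner_smul_left, frobInner_sum_left]
    simp only [frobInner_smul_left]
    have hterm : ∀ i : Fin n, sig (w i) * c i
        = -((1 + Real.exp (y i * ((Uᵀ * X i * V).trace + b)))⁻¹ * y i * frobInner (X i * V) D)
          - ((1 + Real.exp (y i * ((Uᵀ * X i * V).trace + b)))⁻¹ * y i) * e := by
      intro i
      rw [hsig i]
      simp only [hc, hz, hA]
      ring
    rw [Finset.sum_congr rfl fun i _ => hterm i, Finset.sum_sub_distrib, ← Finset.sum_mul]
    rw [Finset.sum_neg_distrib]
    ring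
  -- quadratic bound on c i ^ 2
  have hcsq : ∀ i, (c i)^2 ≤ (frobNorm (A i) + 1)^2 * ((frobNorm D)^2 + e^2) := by
    intro i
    have hy2 : (y i)^2 = 1 := by rcases hy i with h | h <;> rw [h] <;> norm_num
    have : (c i)^2 = (frobInner (A i) D + e)^2 := by
      simp only [hc]; rw [mul_pow, neg_pow]; simp [hy2]
    rw [this]
    exact frob_quad (A i) D e
  -- sum of quadratic bounds
  have hsum : ∑ i, (c i)^2 / 8 ≤ (∑ i, (frobNorm (A i) + 1)^2) * ((frobNorm D)^2 + e^2) / 8 := by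
    rw [Finset.sum_mul, Finset.sum_div]
    apply Finset.sum_le_sum
    intro i _
    exact div_le_div_of_nonneg_right (hcsq i) (by norm_num)
  -- Lipschitz constant bound
  have hLfinal : (1/(n:ℝ)) * ((∑ i, (frobNorm (A i) + 1)^2) * ((frobNorm D)^2 + e^2) / 8)
      ≤ L / 2 * (frobNorm D)^2 + L / 2 * e^2 := by
    set T := ∑ i, (frobNorm (A i) + 1)^2 with hT
    have hT0 : 0 ≤ T := Finset.sum_nonneg fun i _ => sq_nonneg _
    have hQ0 : 0 ≤ (frobNorm D)^2 + e^2 := by positivity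
    have h2 : (1:ℝ) ≤ Real.sqrt 2 := by
      rw [show (1:ℝ) = Real.sqrt 1 by simp]
      exact Real.sqrt_le_sqrt (by norm_num)
    have hL' : (1/(n:ℝ)) * T / 4 ≤ L / 2 := by
      have h4 : (Real.sqrt 2 / (n:ℝ)) * T ≤ L := hL
      have h3 : (1/(n:ℝ)) * T ≤ (Real.sqrt 2 / (n:ℝ)) * T := by
        have : (1:ℝ)/(n:ℝ) ≤ Real.sqrt 2 / (n:ℝ) := by gcongr
        exact mul_le_mul_of_nonneg_right this hT0
      have h5 : 0 ≤ (Real.sqrt 2 / (n:ℝ)) * T :=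
        mul_nonneg (by positivity) hT0
      linarith
    calc (1/(n:ℝ)) * (T * ((frobNorm D)^2 + e^2) / 8)
        = ((1/(n:ℝ)) * T / 4) * (((frobNorm D)^2 + e^2) / 2) := by ring
      _ ≤ (L/2) * (((frobNorm D)^2 + e^2) / 2) := by
          apply mul_le_mul_of_nonneg_right hL' (by positivity)
      _ ≤ L / 2 * (frobNorm D)^2 + L / 2 * e^2 := by
          have hL0 : 0 ≤ L := le_trans (mul_nonneg (by positivity) hT0) hL
          nlinarith
  -- assemble
  unfold bilinLoss
  have hmain : (1/(n:ℝ)) * ∑ i, Real.log (1 + Real.exp (-(y i) * ((U'ᵀ * X i * V).trace + b')))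
      ≤ (1/(n:ℝ)) * ∑ i, Real.log (1 + Real.exp (w i))
        + (1/(n:ℝ)) * (∑ i, sig (w i) * c i)
        + (1/(n:ℝ)) * (∑ i, (c i)^2 / 8) := by
    rw [← mul_add, ← mul_add]
    apply mul_le_mul_of_nonneg_left _ (by positivity)
    rw [← Finset.sum_add_distrib, ← Finset.sum_add_distrib]
    exact Finset.sum_le_sum fun i _ => hsample i
  have hwlog : ∀ i, Real.log (1 + Real.exp (w i))
      = Real.log (1 + Real.exp (-(y i) * ((Uᵀ * X i * V).trace + b))) := by
    intro i; simp only [hw, hz]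
  calc (1/(n:ℝ)) * ∑ i, Real.log (1 + Real.exp (-(y i) * ((U'ᵀ * X i * V).trace + b')))
      ≤ (1/(n:ℝ)) * ∑ i, Real.log (1 + Real.exp (w i))
        + (1/(n:ℝ)) * (∑ i, sig (w i) * c i)
        + (1/(n:ℝ)) * (∑ i, (c i)^2 / 8) := hmain
    _ ≤ (1/(n:ℝ)) * ∑ i, Real.log (1 + Real.exp (-(y i) * ((Uᵀ * X i * V).trace + b)))
        + (frobInner (gradU X y U V b) D + gradB X y U V b * e)
        + (L / 2 * (frobNorm D)^2 + L / 2 * e^2) := by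
        rw [Finset.sum_congr rfl (fun i _ => hwlog i), hgrad]
        have h1 : (1/(n:ℝ)) * (∑ i, (c i)^2 / 8) ≤ L / 2 * (frobNorm D)^2 + L / 2 * e^2 := by
          calc (1/(n:ℝ)) * (∑ i, (c i)^2 / 8)
              ≤ (1/(n:ℝ)) * ((∑ i, (frobNorm (A i) + 1)^2) * ((frobNorm D)^2 + e^2) / 8) := by
                apply mul_le_mul_of_nonneg_left hsum (by positivity)
            _ ≤ _ := hLfinal
        linarith
    _ = _ := by ring
end
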